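/- Let n ≥ 2, let V be a finite set with n elements, let G be a simple graph on V that is a tree, let ℓ be a bijection from {1, …, n-1} to the edge set of G, and let v₀ ∈ V. Then there exists a unique bijection f : V → {1, …, n} with f(v₀) = 1 such that the tuple (σ_1, …, σ_{n-1}) is a minimal factorization of size n, where for each k the permutation σ_k is the transposition of {1, …, n} exchanging f(a) and f(b), with {a, b} being the edge ℓ(k) of G. -/

import Mathlib

open Equiv Equiv.Perm Fin.NatCast

section PermHelpers

variable {α : Type*}

private lemma UVL.pow_eqOn {σ σ' : Equiv.Perm α} {s : Set α} (hm : Set.MapsTo σ' s s)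
    (he : Set.EqOn σ σ' s) : ∀ (k : ℕ) (x : α), x ∈ s → (σ ^ k) x = (σ' ^ k) x ∧ (σ' ^ k) x ∈ s := by
  intro k
  induction k with
  | zero => intro x hx; simpa using hx
  | succ k ih =>
    intro x hx
    obtain ⟨h1, h2⟩ := ih x hx
    rw [pow_succ', pow_succ', Equiv.Perm.mul_apply, Equiv.Perm.mul_apply, h1,
      he h2]
    exact ⟨rfl, hm h2⟩

private lemma UVL.isCycleOn_congr [Finite α] {σ σ' : Equiv.Perm α} {s : Set α}
    (h : σ'.IsCycleOn s) (he : Set.EqOn σ σ' s) : σ.IsCycleOn s := by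
  constructor
  · exact h.1.congr he.symm
  · intro x hx y hy
    obtain ⟨i, _, _, hi⟩ := (h.2 hx hy).exists_pow_eq''
    refine ⟨(i : ℤ), ?_⟩
    rw [zpow_natCast]
    rw [(UVL.pow_eqOn h.1.mapsTo he i x hx).1]
    exact hi

private lemma UVL.pow_mapsTo {σ : Equiv.Perm α} {s : Set α} (hm : Set.MapsTo σ s s) :
    ∀ (k : ℕ) {x : α}, x ∈ s → (σ ^ k) x ∈ s := by
  intro k
  induction k with
  | zero => intro x hx; simpa using hx
  | succ k ih =>
    intro x hx
    rw [pow_succ, Equiv.Perm.mul_apply]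
    exact ih (hm hx)

private lemma UVL.reach_b [DecidableEq α] [Finite α] {c : Equiv.Perm α} {s t : Set α}
    (hs : c.IsCycleOn s) (hst : Disjoint s t)
    {a b : α} (ha : a ∈ s) (hb : b ∈ t) {x : α} (hx : x ∈ s) :
    ∃ m : ℕ, ((Equiv.swap a b * c) ^ m) x = b := by
  set d := Equiv.swap a b * c with hd
  have hP : ∃ j : ℕ, 0 < j ∧ (c ^ j) x = a := by
    obtain ⟨i, hi0, _, hi⟩ := (hs.2 hx ha).exists_pow_eq''
    exact ⟨i, hi0, hi⟩
  classical
  obtain ⟨k, ⟨hk0, hka⟩, hmin⟩ :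
      ∃ k : ℕ, (0 < k ∧ (c ^ k) x = a) ∧ ∀ j < k, ¬(0 < j ∧ (c ^ j) x = a) :=
    ⟨Nat.find hP, Nat.find_spec hP, fun j hj => Nat.find_min hP hj⟩
  have hbs : b ∉ s := fun h => (hst.le_bot ⟨h, hb⟩).elim
  have key : ∀ j, j < k → (d ^ j) x = (c ^ j) x := by
    intro j
    induction j with
    | zero => intro _; simp
    | succ j ih =>
      intro hj
      have hj' : j < k := Nat.lt_of_succ_lt hj
      rw [pow_succ', Equiv.Perm.mul_apply, ih hj', hd, Equiv.Perm.mul_apply,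
        ← Equiv.Perm.mul_apply c, ← pow_succ']
      have hmem : (c ^ (j + 1)) x ∈ s := UVL.pow_mapsTo hs.1.mapsTo _ hx
      have hne_a : (c ^ (j + 1)) x ≠ a := by
        intro h
        exact hmin _ hj ⟨Nat.succ_pos j, h⟩
      have hne_b : (c ^ (j + 1)) x ≠ b := fun h => hbs (h ▸ hmem)
      exact Equiv.swap_apply_of_ne_of_ne hne_a hne_b
  refine ⟨k, ?_⟩
  obtain ⟨j, rfl⟩ := Nat.exists_eq_succ_of_ne_zero hk0.ne'
  rw [pow_succ', Equiv.Perm.mul_apply, key j (Nat.lt_succ_self j), hd,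
    Equiv.Perm.mul_apply, ← Equiv.Perm.mul_apply c, ← pow_succ', hka,
    Equiv.swap_apply_left]

private lemma UVL.isCycleOn_swap_mul [DecidableEq α] [Finite α] {c : Equiv.Perm α} {s t : Set α}
    (hs : c.IsCycleOn s) (ht : c.IsCycleOn t) (hst : Disjoint s t)
    {a b : α} (ha : a ∈ s) (hb : b ∈ t) :
    (Equiv.swap a b * c).IsCycleOn (s ∪ t) := by
  set d := Equiv.swap a b * c with hd
  have hreach_s : ∀ x ∈ s, ∃ m : ℕ, (d ^ m) x = b := fun x hx =>
    UVL.reach_b hs hst ha hb hx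
  have hreach_t : ∀ y ∈ t, ∃ m : ℕ, (d ^ m) y = a := by
    intro y hy
    have := UVL.reach_b ht hst.symm hb ha hy
    rwa [Equiv.swap_comm b a] at this
  have hab : d.SameCycle a b := by
    obtain ⟨m, hm⟩ := hreach_s a ha
    exact ⟨(m : ℤ), by rw [zpow_natCast]; exact hm⟩
  have hall : ∀ x ∈ s ∪ t, d.SameCycle x b := by
    rintro x (hx | hx)
    · obtain ⟨m, hm⟩ := hreach_s x hx
      exact ⟨(m : ℤ), by rw [zpow_natCast]; exact hm⟩
    · obtain ⟨m, hm⟩ := hreach_t x hx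
      exact Equiv.Perm.SameCycle.trans ⟨(m : ℤ), by rw [zpow_natCast]; exact hm⟩ hab
  constructor
  · have hcb : Set.BijOn c (s ∪ t) (s ∪ t) :=
      hs.1.union ht.1 (Set.injOn_of_injective c.injective)
    have hsw : Set.BijOn (Equiv.swap a b) (s ∪ t) (s ∪ t) := by
      have hmt : Set.MapsTo (Equiv.swap a b) (s ∪ t) (s ∪ t) := by
        intro z hz
        rcases eq_or_ne z a with rfl | hza
        · rw [Equiv.swap_apply_left]; exact Or.inr hb
        rcases eq_or_ne z b with rfl | hzb
        · rw [Equiv.swap_apply_right]; exact Or.inl ha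
        · rwa [Equiv.swap_apply_of_ne_of_ne hza hzb]
      refine ⟨hmt, Set.injOn_of_injective (Equiv.swap a b).injective, ?_⟩
      intro z hz
      exact ⟨Equiv.swap a b z, hmt hz, Equiv.swap_apply_self a b z⟩
    have : Set.BijOn (⇑(Equiv.swap a b) ∘ ⇑c) (s ∪ t) (s ∪ t) := hsw.comp hcb
    simpa [hd, Equiv.Perm.coe_mul] using this
  · intro x hx y hy
    exact (hall x hx).trans (hall y hy).symm

end PermHelpers

section GraphHelpers

open SimpleGraph

variable {V : Type*} [DecidableEq V]

private lemma UVL.reach_classify {S : Set (Sym2 V)} {a b : V}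
    (hnr : ¬(SimpleGraph.fromEdgeSet S).Reachable a b) :
    ∀ {x y : V}, (SimpleGraph.fromEdgeSet (insert s(a, b) S)).Walk x y →
      (SimpleGraph.fromEdgeSet S).Reachable x y ∨
      ((SimpleGraph.fromEdgeSet S).Reachable x a ∧ (SimpleGraph.fromEdgeSet S).Reachable b y) ∨
      ((SimpleGraph.fromEdgeSet S).Reachable x b ∧ (SimpleGraph.fromEdgeSet S).Reachable a y) := by
  intro x y w
  induction w with
  | nil => exact Or.inl (Reachable.refl _)
  | @cons x z y h w ih =>
    rw [SimpleGraph.fromEdgeSet_adj] at h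
    obtain ⟨hmem, hne⟩ := h
    rcases Set.mem_insert_iff.mp hmem with heq | hS
    · rw [Sym2.eq_iff] at heq
      rcases heq with ⟨rfl, rfl⟩ | ⟨rfl, rfl⟩
      · -- x = a, z = b
        rcases ih with h1 | ⟨h1, h2⟩ | ⟨h1, h2⟩
        · exact Or.inr (Or.inl ⟨Reachable.refl _, h1⟩)
        · exact (hnr h1.symm).elim
        · exact Or.inl h2
      · -- x = b, z = a
        rcases ih with h1 | ⟨h1, h2⟩ | ⟨h1, h2⟩
        · exact Or.inr (Or.inr ⟨Reachable.refl _, h1⟩)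
        · exact Or.inl h2
        · exact (hnr h1).elim
    · have hadj : (SimpleGraph.fromEdgeSet S).Reachable x z :=
        ((SimpleGraph.fromEdgeSet_adj _).mpr ⟨hS, hne⟩).reachable
      rcases ih with h1 | ⟨h1, h2⟩ | ⟨h1, h2⟩
      · exact Or.inl (hadj.trans h1)
      · exact Or.inr (Or.inl ⟨hadj.trans h1, h2⟩)
      · exact Or.inr (Or.inr ⟨hadj.trans h1, h2⟩)

private lemma UVL.treeProd [Fintype V] :
    ∀ L : List (Sym2 V), L.Nodup → (∀ e ∈ L, ¬e.IsDiag) →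
      (SimpleGraph.fromEdgeSet {e | e ∈ L}).IsAcyclic →
      ∀ x : V,
        ((L.map fun e =>
          Sym2.lift ⟨fun a b => Equiv.swap a b, fun _ _ => Equiv.swap_comm _ _⟩ e).prod).IsCycleOn
          {y | (SimpleGraph.fromEdgeSet {e | e ∈ L}).Reachable x y} := by
  intro L
  induction L with
  | nil =>
    intro _ _ _ x
    have hset : {e : Sym2 V | e ∈ ([] : List (Sym2 V))} = ∅ := by simp
    rw [hset, SimpleGraph.fromEdgeSet_empty]
    simp only [List.map_nil, List.prod_nil]
    rw [Equiv.Perm.isCycleOn_one]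
    intro y hy z hz
    simp only [Set.mem_setOf_eq, reachable_bot] at hy hz
    rw [← hy, ← hz]
  | cons e L' ih =>
    induction e using Sym2.ind with
    | _ a b =>
    intro hnd hd hacyc x
    have hnd' : L'.Nodup := hnd.of_cons
    have heL' : s(a, b) ∉ L' := (List.nodup_cons.mp hnd).1
    have hd' : ∀ e ∈ L', ¬e.IsDiag := fun e he => hd e (List.mem_cons_of_mem _ he)
    have hab : a ≠ b := by
      have := hd s(a, b) (List.mem_cons_self)
      simpa [Sym2.mk_isDiag_iff] using this
    have hsets : {e : Sym2 V | e ∈ s(a, b) :: L'} = insert s(a, b) {e : Sym2 V | e ∈ L'} := by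
      ext e'; simp [List.mem_cons]
    set S : Set (Sym2 V) := {e : Sym2 V | e ∈ L'} with hS
    set H' := SimpleGraph.fromEdgeSet S with hH'
    set H := SimpleGraph.fromEdgeSet {e : Sym2 V | e ∈ s(a, b) :: L'} with hH
    have hle : H' ≤ H := by
      rw [hH, hsets]
      exact SimpleGraph.fromEdgeSet_mono (Set.subset_insert _ _)
    have hHab : H.Adj a b := by
      rw [hH, SimpleGraph.fromEdgeSet_adj]
      exact ⟨List.mem_cons_self, hab⟩
    have hacyc' : H'.IsAcyclic := by
      intro v c hc
      exact hacyc (c.mapLe hle) (hc.mapLe hle)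
    have hnr : ¬H'.Reachable a b := by
      intro hr
      have hbridge := (SimpleGraph.isAcyclic_iff_forall_adj_isBridge.mp hacyc) hHab
      rw [SimpleGraph.isBridge_iff] at hbridge
      refine hbridge (hr.mono ?_)
      intro u v huv
      rw [hH', SimpleGraph.fromEdgeSet_adj] at huv
      show (H \ SimpleGraph.fromEdgeSet {s(a, b)}).Adj u v
      rw [SimpleGraph.sdiff_adj]
      constructor
      · exact hle (by rw [hH', SimpleGraph.fromEdgeSet_adj]; exact huv)
      · rw [SimpleGraph.fromEdgeSet_adj]
        rintro ⟨hmem, -⟩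
        rw [Set.mem_singleton_iff] at hmem
        exact heL' (hmem ▸ huv.1)
    have hclassify := fun {x y : V} (w : H.Walk x y) => by
      rw [hH, hsets] at w
      exact UVL.reach_classify (hnr := by rw [hH'] at hnr; exact hnr) w
    -- the permutation
    have hprod : ((s(a, b) :: L').map fun e =>
        Sym2.lift ⟨fun a b => Equiv.swap a b, fun _ _ => Equiv.swap_comm _ _⟩ e).prod =
        Equiv.swap a b * (L'.map fun e =>
          Sym2.lift ⟨fun a b => Equiv.swap a b, fun _ _ => Equiv.swap_comm _ _⟩ e).prod := by
      simp
    set c := (L'.map fun e =>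
      Sym2.lift ⟨fun a b => Equiv.swap a b, fun _ _ => Equiv.swap_comm _ _⟩ e).prod with hc
    have IH : ∀ v : V, c.IsCycleOn {y | H'.Reachable v y} := fun v => ih hnd' hd' hacyc' v
    rw [hprod]
    have hdisj : Disjoint {y | H'.Reachable a y} {y | H'.Reachable b y} := by
      rw [Set.disjoint_left]
      intro y hy1 hy2
      exact hnr (Reachable.trans hy1 (Reachable.symm hy2))
    by_cases hxa : H.Reachable x a
    · have hseteq : {y | H.Reachable x y} = {y | H'.Reachable a y} ∪ {y | H'.Reachable b y} := by
        ext y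
        constructor
        · intro hy
          have hay : H.Reachable a y := (hxa.symm.trans hy)
          obtain ⟨w⟩ := hay
          rcases hclassify w with h1 | ⟨h1, h2⟩ | ⟨h1, h2⟩
          · exact Or.inl h1
          · exact Or.inr h2
          · exact (hnr h1).elim
        · rintro (hy | hy)
          · exact hxa.trans (hy.mono hle)
          · exact (hxa.trans hHab.reachable).trans (hy.mono hle)
      rw [hseteq]
      exact UVL.isCycleOn_swap_mul (IH a) (IH b) hdisj (Reachable.refl _) (Reachable.refl _)
    · have hxb : ¬H.Reachable x b := fun h => hxa (h.trans hHab.symm.reachable)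
      have hseteq : {y | H.Reachable x y} = {y | H'.Reachable x y} := by
        ext y
        constructor
        · intro hy
          obtain ⟨w⟩ := hy
          rcases hclassify w with h1 | ⟨h1, h2⟩ | ⟨h1, h2⟩
          · exact h1
          · exact (hxa (h1.mono hle)).elim
          · exact (hxb (h1.mono hle)).elim
        · intro hy
          exact hy.mono hle
      rw [hseteq]
      have hnamem : a ∉ {y | H'.Reachable x y} := fun h => hxa (h.mono hle)
      have hnbmem : b ∉ {y | H'.Reachable x y} := fun h => hxb (h.mono hle)
      refine UVL.isCycleOn_congr (IH x) ?_
      intro y hy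
      have hcy : c y ∈ {y | H'.Reachable x y} := (IH x).1.mapsTo hy
      rw [Equiv.Perm.mul_apply]
      exact Equiv.swap_apply_of_ne_of_ne (fun h => hnamem (h ▸ hcy)) (fun h => hnbmem (h ▸ hcy))

end GraphHelpers

section Assembly

variable {α β : Type*}

/-- `Equiv.permCongr` as a monoid hom. -/
private def UVL.permCongrHom (e : α ≃ β) : Equiv.Perm α →* Equiv.Perm β where
  toFun := e.permCongr
  map_one' := by
    ext x; simp [Equiv.permCongr_apply]
  map_mul' := fun p q => by
    ext x; simp [Equiv.permCongr_apply]

private lemma UVL.permCongrHom_apply (e : α ≃ β) (p : Equiv.Perm α) (x : β) :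
    UVL.permCongrHom e p x = e (p (e.symm x)) := rfl

private lemma UVL.lift_swap_comp [DecidableEq α] [DecidableEq β] (f : α ≃ β) (e : Sym2 α) :
    Sym2.lift ⟨fun a b => Equiv.swap (f a) (f b), fun _ _ => Equiv.swap_comm _ _⟩ e =
      UVL.permCongrHom f
        (Sym2.lift ⟨fun a b => Equiv.swap a b, fun _ _ => Equiv.swap_comm _ _⟩ e) := by
  induction e using Sym2.ind with
  | _ a b =>
    ext x
    simp only [Sym2.lift_mk, UVL.permCongrHom_apply, Equiv.swap_apply_def,
      Equiv.symm_apply_eq]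
    split_ifs <;> simp

private lemma UVL.isCycleOn_univ_permCongr (f : α ≃ β) {σ : Equiv.Perm α}
    (h : σ.IsCycleOn Set.univ) : (UVL.permCongrHom f σ).IsCycleOn Set.univ := by
  constructor
  · rw [Set.bijOn_univ]
    exact (UVL.permCongrHom f σ).bijective
  · intro x _ y _
    obtain ⟨i, hi⟩ := h.2 (Set.mem_univ (f.symm x)) (Set.mem_univ (f.symm y))
    refine ⟨i, ?_⟩
    rw [← map_zpow, UVL.permCongrHom_apply, hi, Equiv.apply_symm_apply]

private lemma UVL.finRotate_pow_apply (m : ℕ) :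
    ∀ (k : ℕ) (x : Fin (m + 2)), ((finRotate (m + 2)) ^ k) x = x + (k : Fin (m + 2)) := by
  intro k
  induction k with
  | zero => intro x; simp
  | succ k ih =>
    intro x
    rw [pow_succ', Equiv.Perm.mul_apply, ih, finRotate_succ_apply, Nat.cast_add, Nat.cast_one,
      add_assoc]

private lemma UVL.centralizer_fix (m : ℕ) {π : Equiv.Perm (Fin (m + 2))}
    (hcomm : π * finRotate (m + 2) = finRotate (m + 2) * π) (h0 : π 0 = 0) : π = 1 := by
  have hpowcomm : ∀ k : ℕ, π * (finRotate (m + 2)) ^ k = (finRotate (m + 2)) ^ k * π :=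
    fun k => (Commute.pow_right hcomm k)
  refine Equiv.ext fun x => ?_
  rw [Equiv.Perm.one_apply]
  have hx : x = ((finRotate (m + 2)) ^ (x.val : ℕ)) 0 := by
    rw [UVL.finRotate_pow_apply, zero_add, Fin.cast_val_eq_self]
  calc π x = π (((finRotate (m + 2)) ^ (x.val : ℕ)) 0) := by rw [← hx]
    _ = ((finRotate (m + 2)) ^ (x.val : ℕ)) (π 0) := by
        rw [← Equiv.Perm.mul_apply, hpowcomm, Equiv.Perm.mul_apply]
    _ = x := by rw [h0, ← hx]

end Assembly


/-- `F` is a minimal factorization of size `n`: each entry is a transposition of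
`{1,…,n}` (modelled as `Fin n`, element `i` ↔ index `i-1`) and the left-to-right
product `τ₁ τ₂ ⋯ τ_{n-1}` (apply `τ₁` first) equals the cycle `(1,2,…,n)`,
represented by `finRotate n`. -/
def IsMinFact (n : ℕ) (F : Fin (n - 1) → Equiv.Perm (Fin n)) : Prop :=
  (∀ k, (F k).IsSwap) ∧ (List.ofFn F).reverse.prod = finRotate n

/-- given a tree `G` on an `n`-element vertex set `V`, a bijective
labelling `ℓ` of its edges by `{1,…,n-1}` and a distinguished vertex `v₀`, there is
a unique bijection `f : V → {1,…,n}` with `f v₀ = 1` such that the sequence of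
transpositions `σ_k = (f a, f b)`, where `{a,b}` is the edge with label `k`, is a
minimal factorization of size `n`. -/
theorem unique_vertex_labelling (n : ℕ) (hn : 2 ≤ n) (V : Type*) [Fintype V]
    [DecidableEq V] (hV : Fintype.card V = n) (G : SimpleGraph V) (hG : G.IsTree)
    (ℓ : Fin (n - 1) ≃ G.edgeSet) (v₀ : V) :
    ∃! f : V ≃ Fin n, f v₀ = ⟨0, by omega⟩ ∧
      IsMinFact n (fun k =>
        Sym2.lift ⟨fun a b => Equiv.swap (f a) (f b), fun a b => Equiv.swap_comm _ _⟩
          ((ℓ k : Sym2 V))) := by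
  classical
  obtain ⟨m, rfl⟩ : ∃ m, n = m + 2 := ⟨n - 2, by omega⟩
  set eswap : Sym2 V → Equiv.Perm V :=
    fun e => Sym2.lift ⟨fun a b => Equiv.swap a b, fun _ _ => Equiv.swap_comm _ _⟩ e with heswap
  set L : List (Sym2 V) := (List.ofFn fun k : Fin (m + 2 - 1) => ((ℓ k : Sym2 V))).reverse
    with hL
  have hLset : {e : Sym2 V | e ∈ L} = G.edgeSet := by
    ext e
    simp only [hL, Set.mem_setOf_eq, List.mem_reverse, List.mem_ofFn, Set.mem_range]
    constructor
    · rintro ⟨k, rfl⟩; exact (ℓ k).2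
    · intro he; exact ⟨ℓ.symm ⟨e, he⟩, by simp⟩
  have hLnd : L.Nodup := List.nodup_reverse.mpr (List.nodup_ofFn.mpr
    (fun k k' h => ℓ.injective (Subtype.ext h)))
  have hLd : ∀ e ∈ L, ¬e.IsDiag := fun e he =>
    G.not_isDiag_of_mem_edgeSet (by rw [← hLset]; exact he)
  have hGL : SimpleGraph.fromEdgeSet {e : Sym2 V | e ∈ L} = G := by
    rw [hLset, SimpleGraph.fromEdgeSet_edgeSet]
  set PV : Equiv.Perm V := (L.map eswap).prod with hPV
  have hPVcyc : PV.IsCycleOn Set.univ := by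
    have h := UVL.treeProd L hLnd hLd (by rw [hGL]; exact hG.2) v₀
    rw [hGL] at h
    have hset : {y | G.Reachable v₀ y} = Set.univ :=
      Set.eq_univ_of_forall fun y => hG.1.preconnected v₀ y
    rwa [hset] at h
  -- key equality
  have hPeq : ∀ f : V ≃ Fin (m + 2),
      (List.ofFn fun k : Fin (m + 2 - 1) =>
        Sym2.lift ⟨fun a b => Equiv.swap (f a) (f b), fun a b => Equiv.swap_comm _ _⟩
          ((ℓ k : Sym2 V))).reverse.prod = UVL.permCongrHom f PV := by
    intro f
    have h1 : (List.ofFn fun k : Fin (m + 2 - 1) =>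
        Sym2.lift ⟨fun a b => Equiv.swap (f a) (f b), fun a b => Equiv.swap_comm _ _⟩
          ((ℓ k : Sym2 V))) =
        (List.ofFn fun k : Fin (m + 2 - 1) =>
          UVL.permCongrHom f (eswap ((ℓ k : Sym2 V)))) := by
      congr 1
      funext k
      exact UVL.lift_swap_comp f _
    rw [h1]
    rw [show (List.ofFn fun k : Fin (m + 2 - 1) =>
        UVL.permCongrHom f (eswap ((ℓ k : Sym2 V)))).reverse =
        (L.map eswap).map (UVL.permCongrHom f) from by
      rw [hL, List.map_map, List.map_reverse, List.map_ofFn]; rfl]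
    rw [List.prod_hom]
  set Q : (V ≃ Fin (m + 2)) → Equiv.Perm (Fin (m + 2)) :=
    fun f => UVL.permCongrHom f PV with hQ
  have hQtrans : ∀ (f : V ≃ Fin (m + 2)) (τ : Equiv.Perm (Fin (m + 2))),
      Q (f.trans τ) = τ * Q f * τ⁻¹ := by
    intro f τ
    rw [← Equiv.permCongr_eq_mul]
    rfl
  have hQcyc : ∀ f : V ≃ Fin (m + 2), (Q f).IsCycleOn Set.univ :=
    fun f => UVL.isCycleOn_univ_permCongr f hPVcyc
  have hQfix : ∀ (f : V ≃ Fin (m + 2)) (z : Fin (m + 2)), Q f z ≠ z := by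
    intro f z h
    obtain ⟨w, hw⟩ := Fintype.exists_ne_of_one_lt_card (by simp) z
    obtain ⟨i, hi⟩ := (hQcyc f).2 (Set.mem_univ z) (Set.mem_univ w)
    refine hw ?_
    rw [← hi]
    exact Equiv.Perm.zpow_apply_eq_self_of_apply_eq_self h i
  have hQcycle : ∀ f : V ≃ Fin (m + 2), (Q f).IsCycle := by
    intro f
    exact ⟨0, hQfix f 0, fun y _ => (hQcyc f).2 (Set.mem_univ 0) (Set.mem_univ y)⟩
  have hQsupp : ∀ f : V ≃ Fin (m + 2), (Q f).support = Finset.univ := by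
    intro f
    exact Finset.eq_univ_iff_forall.mpr fun z => Equiv.Perm.mem_support.mpr (hQfix f z)
  -- conjugate to finRotate
  set f₀ : V ≃ Fin (m + 2) := Fintype.equivFinOfCardEq hV with hf₀
  have hconj : IsConj (Q f₀) (finRotate (m + 2)) :=
    (hQcycle f₀).isConj isCycle_finRotate (by rw [hQsupp, support_finRotate])
  obtain ⟨π, hπ⟩ := isConj_iff.mp hconj
  set x0 : Fin (m + 2) := π (f₀ v₀) with hx0
  set ρ : Equiv.Perm (Fin (m + 2)) := (finRotate (m + 2)) ^ (m + 2 - x0.val) with hρ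
  have hρcomm : Commute ρ (finRotate (m + 2)) := (Commute.refl _).pow_left _
  have hρx0 : ρ x0 = 0 := by
    have hsum : x0.val + (m + 2 - x0.val) = m + 2 := by
      have := x0.isLt; omega
    calc ρ x0 = x0 + ((m + 2 - x0.val : ℕ) : Fin (m + 2)) := UVL.finRotate_pow_apply _ _ _
      _ = ((x0.val : ℕ) : Fin (m + 2)) + ((m + 2 - x0.val : ℕ) : Fin (m + 2)) := by
          rw [Fin.cast_val_eq_self]
      _ = (((x0.val + (m + 2 - x0.val)) : ℕ) : Fin (m + 2)) := by rw [Nat.cast_add]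
      _ = 0 := by rw [hsum, Fin.natCast_self]
  set τ : Equiv.Perm (Fin (m + 2)) := ρ * π with hτ
  set f : V ≃ Fin (m + 2) := f₀.trans τ with hf
  have hfQ : Q f = finRotate (m + 2) := by
    rw [hf, hQtrans, hτ]
    rw [show ρ * π * Q f₀ * (ρ * π)⁻¹ = ρ * (π * Q f₀ * π⁻¹) * ρ⁻¹ by group]
    rw [hπ, hρcomm.eq, mul_inv_cancel_right]
  have hfv₀ : f v₀ = 0 := by
    show τ (f₀ v₀) = 0
    rw [hτ, Equiv.Perm.mul_apply, ← hx0, hρx0]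
  have hswaps : ∀ (g : V ≃ Fin (m + 2)) (k : Fin (m + 2 - 1)),
      (Sym2.lift ⟨fun a b => Equiv.swap (g a) (g b), fun a b => Equiv.swap_comm _ _⟩
        ((ℓ k : Sym2 V))).IsSwap := by
    intro g k
    have he : ((ℓ k : Sym2 V)) ∈ G.edgeSet := (ℓ k).2
    revert he
    induction (ℓ k : Sym2 V) using Sym2.ind with
    | _ a b =>
      intro he
      rw [Sym2.lift_mk]
      exact ⟨g a, g b, g.injective.ne (G.ne_of_adj ((SimpleGraph.mem_edgeSet G).mp he)), rfl⟩
  refine ⟨f, ⟨?_, ?_, ?_⟩, ?_⟩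
  · rw [hfv₀]; exact (Fin.ext (by simp)).symm
  · exact hswaps f
  · rw [hPeq f]; exact hfQ
  · -- uniqueness
    rintro g ⟨hg0, hgswap, hgprod⟩
    rw [hPeq g] at hgprod
    have hgQ : Q g = finRotate (m + 2) := hgprod
    set π' : Equiv.Perm (Fin (m + 2)) := f.symm.trans g with hπ'
    have hgf : g = f.trans π' := by
      ext v
      simp [hπ']
    have hQg : Q g = π' * Q f * π'⁻¹ := by rw [hgf, hQtrans]
    have hcomm : π' * finRotate (m + 2) = finRotate (m + 2) * π' := by
      have h1 : π' * finRotate (m + 2) * π'⁻¹ = finRotate (m + 2) := by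
        rw [← hfQ, ← hQg, hgQ, hfQ]
      calc π' * finRotate (m + 2) = π' * finRotate (m + 2) * π'⁻¹ * π' := by group
        _ = finRotate (m + 2) * π' := by rw [h1]
    have h0 : π' 0 = 0 := by
      have : π' (f v₀) = g v₀ := by simp [hπ']
      rw [hfv₀] at this
      rw [this, hg0]
      exact Fin.ext (by simp)
    have hπ'1 : π' = 1 := UVL.centralizer_fix m hcomm h0
    rw [hgf, hπ'1]
    exact Equiv.ext fun v => rfl
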